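/- Let L be any of the modal systems K_nD, D_nD, T_nD, K45_nD, KD45_nD, S5_nD. If dforget_L(δ,p) exists for every atom p and every L-satisfiable d-canonical formula δ, then L is closed under forgetting, i.e., dforget_L(φ,p) exists for every L-satisfiable formula φ and every atom p; moreover dforget_L(φ,p) ≡_L ⋁_{δ∈Φ} dforget_L(δ,p) where Φ = {δ ∈ D^P_{dep(φ)}(L) : δ ⊨_L φ} and P is the set of atoms of φ. -/

import Mathlib

/-!
Common framework: multi-agent epistemic modal logic with distributed knowledge.
Agents are `Fin n`, atoms are natural numbers.
-/

namespace DKLogic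

/-- Formulas of the language `L_D`: atoms, negation, conjunction, disjunction and the
distributed-knowledge modality `D_B` for nonempty sets `B` of agents (together with the
constants `⊤`/`⊥`, which the paper uses as the empty conjunction/disjunction). -/
inductive Formula (n : ℕ) : Type
  | top : Formula n
  | bot : Formula n
  | atom : ℕ → Formula n
  | neg : Formula n → Formula n
  | and : Formula n → Formula n → Formula n
  | or : Formula n → Formula n → Formula n
  | D : {B : Finset (Fin n) // B.Nonempty} → Formula n → Formula n

namespace Formula

/-- Modal depth of a formula. -/
def depth {n : ℕ} : Formula n → ℕ
  | top => 0
  | bot => 0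
  | atom _ => 0
  | neg φ => depth φ
  | and φ ψ => max (depth φ) (depth ψ)
  | or φ ψ => max (depth φ) (depth ψ)
  | D _ φ => depth φ + 1

/-- The atoms occurring in a formula. -/
def atoms {n : ℕ} : Formula n → Finset ℕ
  | top => ∅
  | bot => ∅
  | atom q => {q}
  | neg φ => atoms φ
  | and φ ψ => atoms φ ∪ atoms ψ
  | or φ ψ => atoms φ ∪ atoms ψ
  | D _ φ => atoms φ

end Formula

/-- A Kripke model over world type `W` with `n` agents. -/
structure KModel (n : ℕ) (W : Type) where
  R : Fin n → W → W → Prop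
  V : W → Set ℕ

/-- The distributed accessibility relation `R_B = ⋂_{i ∈ B} R_i`. -/
def KModel.RB {n : ℕ} {W : Type} (M : KModel n W) (B : Finset (Fin n)) (s t : W) : Prop :=
  ∀ i ∈ B, M.R i s t

/-- Satisfaction. -/
def Sat {n : ℕ} {W : Type} (M : KModel n W) : W → Formula n → Prop
  | _, .top => True
  | _, .bot => False
  | s, .atom q => q ∈ M.V s
  | s, .neg φ => ¬ Sat M s φ
  | s, .and φ ψ => Sat M s φ ∧ Sat M s ψ
  | s, .or φ ψ => Sat M s φ ∨ Sat M s ψ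
  | s, .D B φ => ∀ t : W, M.RB B.1 s t → Sat M t φ

/-- Seriality of a relation. -/
def Serial {W : Type} (R : W → W → Prop) : Prop := ∀ x, ∃ y, R x y

/-- Euclideanness of a relation. -/
def Euclidean {W : Type} (R : W → W → Prop) : Prop := ∀ x y z, R x y → R x z → R y z

/-- The six modal systems. -/
inductive MSys : Type
  | K | D | T | K45 | KD45 | S5

/-- `L`-models: frame conditions on each accessibility relation for each system. -/
def IsModel {n : ℕ} {W : Type} : MSys → KModel n W → Prop
  | .K, _ => True
  | .D, M => ∀ i, Serial (M.R i)
  | .T, M => ∀ i, Reflexive (M.R i)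
  | .K45, M => ∀ i, Transitive (M.R i) ∧ Euclidean (M.R i)
  | .KD45, M => ∀ i, Serial (M.R i) ∧ Transitive (M.R i) ∧ Euclidean (M.R i)
  | .S5, M => ∀ i, Reflexive (M.R i) ∧ Transitive (M.R i) ∧ Euclidean (M.R i)

/-- Semantic consequence over `L`-models. -/
def Entails {n : ℕ} (L : MSys) (φ ψ : Formula n) : Prop :=
  ∀ (W : Type) (M : KModel n W), IsModel L M → ∀ s : W, Sat M s φ → Sat M s ψ

/-- Semantic equivalence over `L`-models. -/
def EquivL {n : ℕ} (L : MSys) (φ ψ : Formula n) : Prop :=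
  Entails L φ ψ ∧ Entails L ψ φ

/-- `L`-satisfiability. -/
def SatL {n : ℕ} (L : MSys) (φ : Formula n) : Prop :=
  ∃ (W : Type) (M : KModel n W) (s : W), IsModel L M ∧ Sat M s φ

/-- Collective `p`-bisimulation between two pointed models. -/
def CollPBisim {n : ℕ} {W W' : Type} (M : KModel n W) (s : W) (M' : KModel n W') (s' : W')
    (p : ℕ) : Prop :=
  ∃ ρ : W → W' → Prop, ρ s s' ∧
    ∀ u u', ρ u u' →
      ((∀ q : ℕ, q ≠ p → (q ∈ M.V u ↔ q ∈ M'.V u')) ∧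
       (∀ B : Finset (Fin n), B.Nonempty → ∀ v, M.RB B u v → ∃ v', M'.RB B u' v' ∧ ρ v v') ∧
       (∀ B : Finset (Fin n), B.Nonempty → ∀ v', M'.RB B u' v' → ∃ v, M.RB B u v ∧ ρ v v'))

/-- `ψ` is a result of forgetting `p` in `φ` in system `L`
(written `dforget_L(φ,p) ≡_L ψ` in the paper). -/
def IsForget {n : ℕ} (L : MSys) (φ : Formula n) (p : ℕ) (ψ : Formula n) : Prop :=
  ψ.atoms ⊆ φ.atoms.erase p ∧
  (∀ (W W' : Type) (M : KModel n W) (M' : KModel n W') (s : W) (s' : W'),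
      IsModel L M → IsModel L M' → Sat M s φ → CollPBisim M s M' s' p → Sat M' s' ψ) ∧
  (∀ (W' : Type) (M' : KModel n W') (s' : W'),
      IsModel L M' → Sat M' s' ψ →
      ∃ (W : Type) (M : KModel n W) (s : W), IsModel L M ∧ Sat M s φ ∧ CollPBisim M s M' s' p)

/-- `L` is closed under forgetting: `dforget_L(φ,p)` exists (as an `L`-satisfiable formula)
for every `L`-satisfiable `φ` and every atom `p`. -/
def ClosedUnderForgetting {n : ℕ} (L : MSys) : Prop :=
  ∀ (φ : Formula n) (p : ℕ), SatL L φ → ∃ ψ : Formula n, SatL L ψ ∧ IsForget L φ p ψ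

/-- `ψ` is a uniform interpolant of `φ` in `L` over `P \ {p}`. -/
def IsUI {n : ℕ} (L : MSys) (P : Finset ℕ) (p : ℕ) (φ ψ : Formula n) : Prop :=
  SatL L ψ ∧ ψ.atoms ⊆ P.erase p ∧
  ∀ χ : Formula n, p ∉ χ.atoms → (Entails L φ χ ↔ Entails L ψ χ)

/-- The uniform interpolation property for the system `L`. -/
def HasUIP {n : ℕ} (L : MSys) : Prop :=
  ∀ (P : Finset ℕ) (p : ℕ) (φ : Formula n),
    p ∈ P → φ.atoms ⊆ P → SatL L φ → ∃ ψ : Formula n, IsUI L P p φ ψ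

/-! ### Canonical formulas -/

/-- Big conjunction of a list of formulas (`⊤` for the empty list). -/
def bigAnd {n : ℕ} : List (Formula n) → Formula n
  | [] => .top
  | φ :: l => .and φ (bigAnd l)

/-- Big disjunction of a list of formulas (`⊥` for the empty list). -/
def bigOr {n : ℕ} : List (Formula n) → Formula n
  | [] => .bot
  | φ :: l => .or φ (bigOr l)

/-- An injective numerical code of formulas, used to fix a canonical ordering. -/
def fcode {n : ℕ} : Formula n → ℕ
  | .top => Nat.pair 0 0
  | .bot => Nat.pair 1 0
  | .atom q => Nat.pair 2 q
  | .neg φ => Nat.pair 3 (fcode φ)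
  | .and φ ψ => Nat.pair 4 (Nat.pair (fcode φ) (fcode ψ))
  | .or φ ψ => Nat.pair 5 (Nat.pair (fcode φ) (fcode ψ))
  | .D B φ => Nat.pair 6 (Nat.pair (B.1.sum fun i => 2 ^ (i : ℕ)) (fcode φ))

/-- Insert a formula into a strictly `fcode`-sorted list (dropping duplicates). -/
def insertF {n : ℕ} (φ : Formula n) : List (Formula n) → List (Formula n)
  | [] => [φ]
  | ψ :: l =>
      if fcode φ < fcode ψ then φ :: ψ :: l
      else if fcode φ = fcode ψ then ψ :: l
      else ψ :: insertF φ l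

/-- The canonical (sorted, duplicate-free) list representing the set of formulas in `l`. -/
def normList {n : ℕ} (l : List (Formula n)) : List (Formula n) := l.foldr insertF []

/-- The minterm of `P` that is positive exactly on `S`. -/
def minterm {n : ℕ} (P S : Finset ℕ) : Formula n :=
  bigAnd ((P.sort (· ≤ ·)).map fun q =>
    if q ∈ S then Formula.atom q else Formula.neg (Formula.atom q))

/-- The subset of `Fin n` whose characteristic bits are those of `m`. -/
def natToFinset (n m : ℕ) : Finset (Fin n) :=
  Finset.univ.filter fun i => m.testBit (i : ℕ)

/-- A canonical enumeration of all nonempty subsets of the agent set. -/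
def neSubsets (n : ℕ) : List {B : Finset (Fin n) // B.Nonempty} :=
  ((List.range (2 ^ n)).map (natToFinset n)).filterMap fun B =>
    if h : B.Nonempty then some ⟨B, h⟩ else none

/-- `∇_B Φ = D_B (⋁Φ) ∧ ⋀_{φ ∈ Φ} ¬ D_B ¬ φ`. -/
def nabla {n : ℕ} (B : {B : Finset (Fin n) // B.Nonempty}) (Φ : List (Formula n)) : Formula n :=
  Formula.and (Formula.D B (bigOr Φ))
    (bigAnd (Φ.map fun φ => Formula.neg (Formula.D B (Formula.neg φ))))

/-- Underlying data of a d-canonical formula: a set of (positive) atoms together with,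
for every set `B` of agents, a list of successor data. -/
inductive CData (n : ℕ) : Type
  | mk (S : Finset ℕ) (succ : Finset (Fin n) → List (CData n)) : CData n

/-- The positive-atom component. -/
def CData.S {n : ℕ} : CData n → Finset ℕ
  | mk S _ => S

/-- The `B`-successor data. -/
def CData.succ {n : ℕ} : CData n → Finset (Fin n) → List (CData n)
  | mk _ f => f

/-- The d-canonical formula of depth `k` over `P` determined by the data `d`:
`δ_0 ∧ ⋀_{B} ∇_B Φ_B`. -/
def toFormula {n : ℕ} (P : Finset ℕ) : ℕ → CData n → Formula n
  | 0, d => minterm P (d.S ∩ P)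
  | (k+1), d =>
      Formula.and (minterm P (d.S ∩ P))
        (bigAnd ((neSubsets n).map fun B =>
          nabla B (normList ((d.succ B.1).map fun c => toFormula P k c))))

/-- `D^P_k`: the set of d-canonical formulas of depth `k` over `P`. -/
def DP {n : ℕ} (P : Finset ℕ) (k : ℕ) : Set (Formula n) := Set.range (toFormula P k)

/-- `R_B(δ)` for `δ` the level-`k` canonical formula with data `d`:
the set of `B`-successor canonical formulas (of level `k - 1`). -/
def RBset {n : ℕ} (P : Finset ℕ) (k : ℕ) (d : CData n) (B : Finset (Fin n)) :
    Set (Formula n) :=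
  {φ | ∃ c ∈ d.succ B, φ = toFormula P (k - 1) c}

/-- One pruning step `δ ↦ δ^↓` on data (first argument: the level of the input). -/
def downD {n : ℕ} : ℕ → CData n → CData n
  | 0, d => d
  | 1, d => CData.mk d.S (fun _ => [])
  | (k+2), d => CData.mk d.S (fun B => (d.succ B).map fun c => downD (k+1) c)

/-- `l`-fold pruning `δ ↦ δ^{↓l}` on data (first argument: the level of the input). -/
def downIter {n : ℕ} : ℕ → ℕ → CData n → CData n
  | _, 0, d => d
  | k, (l+1), d => downIter (k-1) l (downD k d)

/-- Truncation `δ ↦ δ^{↑l}` on data (first argument: the level of the input). -/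
def upD {n : ℕ} : ℕ → ℕ → CData n → CData n
  | _, 0, d => CData.mk d.S (fun _ => [])
  | 0, (_+1), d => d
  | (k+1), (l+1), d => CData.mk d.S (fun B => (d.succ B).map fun c => upD k l c)

/-- The canonical formula `δ` of level `k` with data `d`. -/
def cf {n : ℕ} (P : Finset ℕ) (k : ℕ) (d : CData n) : Formula n := toFormula P k d

/-- `δ^{↓l}` (a canonical formula of level `k - l`). -/
def cfDown {n : ℕ} (P : Finset ℕ) (k l : ℕ) (d : CData n) : Formula n :=
  toFormula P (k - l) (downIter k l d)

/-- `δ^{↑l}` (a canonical formula of level `min k l`). -/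
def cfUp {n : ℕ} (P : Finset ℕ) (k l : ℕ) (d : CData n) : Formula n :=
  toFormula P (min k l) (upD k l d)

/-- Literal elimination: `φ^p` replaces every occurrence of `¬p` by `⊤` and subsequently
every remaining occurrence of `p` by `⊤`. -/
def elim {n : ℕ} (p : ℕ) : Formula n → Formula n
  | .top => .top
  | .bot => .bot
  | .atom q => if q = p then .top else .atom q
  | .neg (.atom q) => if q = p then .top else .neg (.atom q)
  | .neg φ => .neg (elim p φ)
  | .and φ ψ => .and (elim p φ) (elim p ψ)
  | .or φ ψ => .or (elim p φ) (elim p ψ)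
  | .D B φ => .D B (elim p φ)


section Aux
open Classical
variable {n : ℕ}

deriving instance DecidableEq for Formula

lemma sat_bigAnd {W} {M : KModel n W} {s : W} {l : List (Formula n)} :
    Sat M s (bigAnd l) ↔ ∀ φ ∈ l, Sat M s φ := by
  induction l with
  | nil => simp [bigAnd, Sat]
  | cons φ l ih => simp [bigAnd, Sat, ih]

lemma sat_bigOr {W} {M : KModel n W} {s : W} {l : List (Formula n)} :
    Sat M s (bigOr l) ↔ ∃ φ ∈ l, Sat M s φ := by
  induction l with
  | nil => simp [bigOr, Sat]
  | cons φ l ih => simp [bigOr, Sat, ih]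

lemma atoms_bigAnd {l : List (Formula n)} {P : Finset ℕ} (h : ∀ φ ∈ l, Formula.atoms φ ⊆ P) :
    (bigAnd l).atoms ⊆ P := by
  induction l with
  | nil => simp [bigAnd, Formula.atoms]
  | cons φ l ih =>
    simp only [bigAnd, Formula.atoms, Finset.union_subset_iff]
    exact ⟨h φ (by simp), ih fun ψ hψ => h ψ (by simp [hψ])⟩

lemma atoms_bigOr {l : List (Formula n)} {P : Finset ℕ} (h : ∀ φ ∈ l, Formula.atoms φ ⊆ P) :
    (bigOr l).atoms ⊆ P := by
  induction l with
  | nil => simp [bigOr, Formula.atoms]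
  | cons φ l ih =>
    simp only [bigOr, Formula.atoms, Finset.union_subset_iff]
    exact ⟨h φ (by simp), ih fun ψ hψ => h ψ (by simp [hψ])⟩

lemma fcode_injective : Function.Injective (fcode (n := n)) := by
  intro φ ψ h
  induction φ generalizing ψ <;> cases ψ <;> simp_all [fcode, Nat.pair_eq_pair]
  case neg.neg => rename_i ih; exact ih rfl
  case and.and => rename_i ih1 ih2; exact ⟨ih1 rfl, ih2 rfl⟩
  case or.or => rename_i ih1 ih2; exact ⟨ih1 rfl, ih2 rfl⟩
  case D.D =>
    rename_i B φ B' ψ ih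
    obtain ⟨h1, h2⟩ := h
    have hB : B = B' := by
      apply Subtype.ext
      apply Finset.image_injective (Fin.val_injective)
      apply Finset.geomSum_injective (le_refl 2)
      simpa [Finset.sum_image, Fin.val_injective.eq_iff] using h1
    exact ⟨hB, ih rfl⟩

/-! normList theory -/

def flt {n : ℕ} (a b : Formula n) : Prop := fcode a < fcode b

instance : IsAntisymm (Formula n) flt :=
  ⟨fun _ _ h1 h2 => absurd (lt_trans h1 h2) (lt_irrefl _)⟩

lemma mem_insertF {φ x : Formula n} {l : List (Formula n)} :
    x ∈ insertF φ l ↔ x = φ ∨ x ∈ l := by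
  induction l with
  | nil => simp [insertF]
  | cons ψ l ih =>
    by_cases h1 : fcode φ < fcode ψ
    · simp only [insertF, if_pos h1, List.mem_cons]
      try tauto
    · by_cases h2 : fcode φ = fcode ψ
      · have hφψ : φ = ψ := fcode_injective h2
        subst hφψ
        simp [insertF]
        try tauto
      · simp only [insertF, if_neg h1, if_neg h2, List.mem_cons, ih]
        tauto

lemma pairwise_insertF {φ : Formula n} {l : List (Formula n)} (h : l.Pairwise flt) :
    (insertF φ l).Pairwise flt := by
  induction l with
  | nil => simp [insertF]
  | cons ψ l ih =>
    rw [List.pairwise_cons] at h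
    obtain ⟨hψ, hl⟩ := h
    by_cases h1 : fcode φ < fcode ψ
    · simp only [insertF, if_pos h1]
      refine List.Pairwise.cons ?_ (List.Pairwise.cons hψ hl)
      intro x hx
      rcases List.mem_cons.1 hx with rfl | hx
      · exact h1
      · exact lt_trans h1 (hψ x hx)
    · by_cases h2 : fcode φ = fcode ψ
      · simp only [insertF, if_neg h1, if_pos h2]
        exact List.Pairwise.cons hψ hl
      · simp only [insertF, if_neg h1, if_neg h2]
        refine List.Pairwise.cons ?_ (ih hl)
        intro x hx
        rcases mem_insertF.1 hx with rfl | hx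
        · exact lt_of_le_of_ne (not_lt.1 h1) fun hc => h2 hc.symm
        · exact hψ x hx

lemma mem_normList {l : List (Formula n)} {x : Formula n} :
    x ∈ normList l ↔ x ∈ l := by
  induction l with
  | nil => simp [normList]
  | cons φ l ih =>
    show x ∈ insertF φ (normList l) ↔ _
    rw [mem_insertF, ih, List.mem_cons]

lemma pairwise_normList {l : List (Formula n)} : (normList l).Pairwise flt := by
  induction l with
  | nil => simp [normList]
  | cons φ l ih => exact pairwise_insertF ih

lemma nodup_normList {l : List (Formula n)} : (normList l).Nodup :=
  (pairwise_normList (l := l)).imp fun h => by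
    rintro rfl; exact lt_irrefl _ h

lemma normList_eq_of_mem_iff {l l' : List (Formula n)} (h : ∀ x, x ∈ l ↔ x ∈ l') :
    normList l = normList l' := by
  refine List.Perm.eq_of_pairwise (fun _ _ _ _ h1 h2 => absurd (lt_trans h1 h2) (lt_irrefl _)) pairwise_normList pairwise_normList ?_
  rw [List.perm_ext_iff_of_nodup nodup_normList nodup_normList]
  intro a; rw [mem_normList, mem_normList]; exact h a

/-! minterm lemmas -/

lemma sat_minterm_iff {W} {M : KModel n W} {s : W} {P T : Finset ℕ} :
    Sat M s (minterm (n := n) P T) ↔ ∀ q ∈ P, (q ∈ M.V s ↔ q ∈ T) := by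
  rw [minterm, sat_bigAnd]
  constructor
  · intro h q hq
    have := h _ (List.mem_map_of_mem ((Finset.mem_sort _).2 hq))
    by_cases hT : q ∈ T <;> simp [hT, Sat] at this <;> simp [hT, this]
  · intro h φ hφ
    obtain ⟨q, hq, rfl⟩ := List.mem_map.1 hφ
    have hq' := (Finset.mem_sort _).1 hq
    by_cases hT : q ∈ T <;> simp [hT, Sat, (h q hq')]

lemma atoms_minterm {P T : Finset ℕ} : (minterm (n := n) P T).atoms ⊆ P := by
  apply atoms_bigAnd
  intro φ hφ
  obtain ⟨q, hq, rfl⟩ := List.mem_map.1 hφ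
  have hq' := (Finset.mem_sort _).1 hq
  by_cases hT : q ∈ T <;> simp [hT, Formula.atoms, Finset.singleton_subset_iff, hq']

/-! neSubsets completeness -/

lemma natToFinset_surj (B : Finset (Fin n)) : ∃ m < 2 ^ n, natToFinset n m = B := by
  have hinj : Function.Injective (fun m : Fin (2 ^ n) => natToFinset n m.1) := by
    intro a b hab
    apply Fin.ext
    apply Nat.eq_of_testBit_eq
    intro j
    by_cases hj : j < n
    · have := congrArg (fun S => (⟨j, hj⟩ : Fin n) ∈ S) hab
      simpa [natToFinset, Finset.mem_filter] using this
    · have h1 : a.1 < 2 ^ j := lt_of_lt_of_le a.2 (Nat.pow_le_pow_right (by norm_num) (le_of_not_gt hj))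
      have h2 : b.1 < 2 ^ j := lt_of_lt_of_le b.2 (Nat.pow_le_pow_right (by norm_num) (le_of_not_gt hj))
      rw [Nat.testBit_eq_false_of_lt h1, Nat.testBit_eq_false_of_lt h2]
  have hcard : Fintype.card (Fin (2 ^ n)) = Fintype.card (Finset (Fin n)) := by
    simp [Fintype.card_finset]
  have hsurj : Function.Surjective (fun m : Fin (2 ^ n) => natToFinset n m.1) :=
    ((Fintype.bijective_iff_injective_and_card _).2 ⟨hinj, hcard⟩).2
  obtain ⟨m, hm⟩ := hsurj B
  exact ⟨m.1, m.2, hm⟩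

lemma mem_neSubsets (B : {B : Finset (Fin n) // B.Nonempty}) : B ∈ neSubsets n := by
  obtain ⟨m, hm, hB⟩ := natToFinset_surj B.1
  rw [neSubsets, List.mem_filterMap]
  refine ⟨B.1, List.mem_map.2 ⟨m, List.mem_range.2 hm, hB⟩, ?_⟩
  rw [dif_pos B.2]

/-! canonical finite sets -/

noncomputable def sortedListOf (A : Finset (Formula n)) : List (Formula n) := normList A.toList

lemma sortedListOf_toFinset (l : List (Formula n)) : sortedListOf l.toFinset = normList l := by
  apply normList_eq_of_mem_iff
  intro x
  rw [Finset.mem_toList, List.mem_toFinset]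

def allLists {α β : Type} [DecidableEq β] : List α → (α → Finset β) → Finset (List β)
  | [], _ => {[]}
  | a :: l, f => ((f a) ×ˢ allLists l f).image fun p => p.1 :: p.2

lemma map_mem_allLists {α β : Type} [DecidableEq β] {l : List α} {f : α → Finset β} {g : α → β}
    (h : ∀ a ∈ l, g a ∈ f a) : l.map g ∈ allLists l f := by
  induction l with
  | nil => simp [allLists]
  | cons a l ih =>
    simp only [allLists, List.map, Finset.mem_image]
    exact ⟨(g a, l.map g), Finset.mem_product.2
      ⟨h a (by simp), ih fun b hb => h b (by simp [hb])⟩, rfl⟩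

noncomputable def canonF (P : Finset ℕ) : ℕ → Finset (Formula n)
  | 0 => P.powerset.image fun S => minterm P S
  | (k + 1) =>
      (P.powerset ×ˢ allLists (neSubsets n) fun B =>
          ((canonF P k).powerset.image sortedListOf).image (nabla B)).image
        fun p => Formula.and (minterm P p.1) (bigAnd p.2)

lemma toFormula_mem_canonF (P : Finset ℕ) : ∀ k (d : CData n), toFormula P k d ∈ canonF P k := by
  intro k
  induction k with
  | zero =>
    intro d
    exact Finset.mem_image.2 ⟨d.S ∩ P, Finset.mem_powerset.2 Finset.inter_subset_right, rfl⟩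
  | succ k ih =>
    intro d
    apply Finset.mem_image.2
    refine ⟨(d.S ∩ P, (neSubsets n).map fun B =>
      nabla B (normList ((d.succ B.1).map fun c => toFormula P k c))), ?_, rfl⟩
    apply Finset.mem_product.2
    refine ⟨Finset.mem_powerset.2 Finset.inter_subset_right, ?_⟩
    apply map_mem_allLists
    intro B _
    apply Finset.mem_image.2
    refine ⟨sortedListOf ((d.succ B.1).map fun c => toFormula P k c).toFinset,
      Finset.mem_image.2 ⟨_, Finset.mem_powerset.2 ?_, rfl⟩, ?_⟩
    · intro x hx
      obtain ⟨c, _, rfl⟩ := List.mem_map.1 (List.mem_toFinset.1 hx)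
      exact ih c
    · rw [sortedListOf_toFinset]

lemma atoms_nabla {B : {B : Finset (Fin n) // B.Nonempty}} {Φ : List (Formula n)} {P : Finset ℕ}
    (h : ∀ γ ∈ Φ, Formula.atoms γ ⊆ P) : (nabla B Φ).atoms ⊆ P := by
  simp only [nabla, Formula.atoms, Finset.union_subset_iff]
  refine ⟨atoms_bigOr h, atoms_bigAnd ?_⟩
  intro φ hφ
  obtain ⟨γ, hγ, rfl⟩ := List.mem_map.1 hφ
  simpa [Formula.atoms] using h γ hγ

lemma atoms_toFormula (P : Finset ℕ) : ∀ k (d : CData n), (toFormula P k d).atoms ⊆ P := by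
  intro k
  induction k with
  | zero => intro d; exact atoms_minterm
  | succ k ih =>
    intro d
    show (Formula.and _ _).atoms ⊆ P
    simp only [Formula.atoms, Finset.union_subset_iff]
    refine ⟨atoms_minterm, atoms_bigAnd ?_⟩
    intro φ hφ
    obtain ⟨B, _, rfl⟩ := List.mem_map.1 hφ
    apply atoms_nabla
    intro γ hγ
    obtain ⟨c, _, rfl⟩ := List.mem_map.1 (mem_normList.1 hγ)
    exact ih c

/-! Sat unfolding lemmas -/

@[simp] lemma sat_and {W} {M : KModel n W} {s : W} {φ ψ : Formula n} :
    Sat M s (Formula.and φ ψ) ↔ Sat M s φ ∧ Sat M s ψ := Iff.rfl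

@[simp] lemma sat_neg {W} {M : KModel n W} {s : W} {φ : Formula n} :
    Sat M s (Formula.neg φ) ↔ ¬ Sat M s φ := Iff.rfl

@[simp] lemma sat_or {W} {M : KModel n W} {s : W} {φ ψ : Formula n} :
    Sat M s (Formula.or φ ψ) ↔ Sat M s φ ∨ Sat M s ψ := Iff.rfl

@[simp] lemma sat_D {W} {M : KModel n W} {s : W} {B : {B : Finset (Fin n) // B.Nonempty}}
    {φ : Formula n} : Sat M s (Formula.D B φ) ↔ ∀ t, M.RB B.1 s t → Sat M t φ := Iff.rfl

/-! canonical data of a pointed model and the truth lemma -/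

noncomputable def cdataOf (P : Finset ℕ) {W : Type} (M : KModel n W) : ℕ → W → CData n
  | 0, s => CData.mk (P.filter fun q => q ∈ M.V s) fun _ => []
  | (k+1), s =>
    CData.mk (P.filter fun q => q ∈ M.V s) fun B =>
      ((canonF P k).filter fun γ =>
          ∃ t, M.RB B s t ∧ toFormula P k (cdataOf P M k t) = γ).toList.map
        fun γ => cdataOf P M k (@Classical.epsilon W ⟨s⟩
          fun t => M.RB B s t ∧ toFormula P k (cdataOf P M k t) = γ)

lemma sat_cdataOf (P : Finset ℕ) {W : Type} (M : KModel n W) :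
    ∀ k (s : W), Sat M s (toFormula P k (cdataOf P M k s)) := by
  intro k
  induction k with
  | zero =>
    intro s
    show Sat M s (minterm P _)
    rw [sat_minterm_iff]
    intro q hq
    simp [cdataOf, CData.S, Finset.mem_inter, Finset.mem_filter, hq]
  | succ k ih =>
    intro s
    haveI : Nonempty W := ⟨s⟩
    refine sat_and.2 ⟨?_, ?_⟩
    · rw [sat_minterm_iff]
      intro q hq
      simp [cdataOf, CData.S, Finset.mem_inter, Finset.mem_filter, hq]
    · rw [sat_bigAnd]
      intro φ hφ
      obtain ⟨B, _, rfl⟩ := List.mem_map.1 hφ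
      set G := (canonF P k).filter
        (fun γ => ∃ t, M.RB B.1 s t ∧ toFormula P k (cdataOf P M k t) = γ) with hG
      have hmem : ∀ x : Formula n,
          (x ∈ ((cdataOf P M (k+1) s).succ B.1).map (fun c => toFormula P k c)) ↔ x ∈ G := by
        intro x
        constructor
        · intro hx
          obtain ⟨c, hc, rfl⟩ := List.mem_map.1 hx
          obtain ⟨γ, hγ, rfl⟩ := List.mem_map.1 hc
          rw [Finset.mem_toList] at hγ
          have hspec := Classical.epsilon_spec
            ((Finset.mem_filter.1 hγ).2 :
              ∃ t, M.RB B.1 s t ∧ toFormula P k (cdataOf P M k t) = γ)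
          rw [hspec.2]
          exact hγ
        · intro hx
          obtain ⟨hcan, t, hRB, heq⟩ := Finset.mem_filter.1 hx
          apply List.mem_map.2
          refine ⟨cdataOf P M k (Classical.epsilon
            fun t => M.RB B.1 s t ∧ toFormula P k (cdataOf P M k t) = x), ?_, ?_⟩
          · exact List.mem_map.2 ⟨x, Finset.mem_toList.2 hx, rfl⟩
          · exact (Classical.epsilon_spec (⟨t, hRB, heq⟩ :
              ∃ t, M.RB B.1 s t ∧ toFormula P k (cdataOf P M k t) = x)).2
      refine sat_and.2 ⟨?_, ?_⟩
      · refine sat_D.2 fun t hRB => ?_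
        refine sat_bigOr.2 ⟨toFormula P k (cdataOf P M k t), ?_, ih t⟩
        rw [mem_normList, hmem]
        exact Finset.mem_filter.2 ⟨toFormula_mem_canonF P k _, t, hRB, rfl⟩
      · rw [sat_bigAnd]
        intro ψ hψ
        obtain ⟨γ, hγ, rfl⟩ := List.mem_map.1 hψ
        rw [mem_normList, hmem] at hγ
        obtain ⟨_, t, hRB, heq⟩ := Finset.mem_filter.1 hγ
        refine sat_neg.2 fun hall => ?_
        exact sat_neg.1 (sat_D.1 hall t hRB) (heq ▸ ih t)

/-! agreement -/

lemma sat_toFormula_atom_iff {W} {M : KModel n W} {s : W} {P : Finset ℕ} {k : ℕ} {d : CData n}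
    (h : Sat M s (toFormula P k d)) : ∀ q ∈ P, (q ∈ M.V s ↔ q ∈ d.S ∩ P) := by
  cases k with
  | zero => exact sat_minterm_iff.1 h
  | succ k => exact sat_minterm_iff.1 (sat_and.1 h).1

lemma sat_toFormula_nabla {W} {M : KModel n W} {s : W} {P : Finset ℕ} {k : ℕ} {d : CData n}
    (B : {B : Finset (Fin n) // B.Nonempty}) (h : Sat M s (toFormula P (k+1) d)) :
    Sat M s (nabla B (normList ((d.succ B.1).map fun c => toFormula P k c))) := by
  have h2 := (sat_and.1 h).2
  rw [sat_bigAnd] at h2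
  exact h2 _ (List.mem_map.2 ⟨B, mem_neSubsets B, rfl⟩)

lemma sat_nabla_iff {W} {M : KModel n W} {s : W} {B : {B : Finset (Fin n) // B.Nonempty}}
    {Φ : List (Formula n)} :
    Sat M s (nabla B Φ) ↔
      ((∀ t, M.RB B.1 s t → ∃ γ ∈ Φ, Sat M t γ) ∧
       (∀ γ ∈ Φ, ∃ t, M.RB B.1 s t ∧ Sat M t γ)) := by
  simp only [nabla, sat_and, sat_D, sat_bigOr, sat_bigAnd]
  constructor
  · rintro ⟨h1, h2⟩
    refine ⟨h1, fun γ hγ => ?_⟩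
    have hx := h2 _ (List.mem_map.2 ⟨γ, hγ, rfl⟩)
    rw [sat_neg] at hx
    by_contra hc
    push_neg at hc
    exact hx (sat_D.2 fun t ht => sat_neg.2 (hc t ht))
  · rintro ⟨h1, h2⟩
    refine ⟨h1, fun ψ hψ => ?_⟩
    obtain ⟨γ, hγ, rfl⟩ := List.mem_map.1 hψ
    obtain ⟨t, ht, hsat⟩ := h2 γ hγ
    exact sat_neg.2 fun hall => sat_neg.1 (sat_D.1 hall t ht) hsat

lemma agree (P : Finset ℕ) :
    ∀ k (φ : Formula n), φ.depth ≤ k → φ.atoms ⊆ P →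
      ∀ (d : CData n) {W W' : Type} (M : KModel n W) (s : W) (M' : KModel n W') (s' : W'),
        Sat M s (toFormula P k d) → Sat M' s' (toFormula P k d) →
        (Sat M s φ ↔ Sat M' s' φ) := by
  intro k
  induction k with
  | zero =>
    intro φ
    induction φ with
    | top => intro _ _ d W W' M s M' s' _ _; simp [Sat]
    | bot => intro _ _ d W W' M s M' s' _ _; simp [Sat]
    | atom q =>
      intro _ hat d W W' M s M' s' h h'
      have hq : q ∈ P := hat (by simp [Formula.atoms])
      show q ∈ M.V s ↔ q ∈ M'.V s'
      rw [sat_toFormula_atom_iff h q hq, sat_toFormula_atom_iff h' q hq]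
    | neg ψ ih =>
      intro hd hat d W W' M s M' s' h h'
      have := ih hd hat d M s M' s' h h'
      simp only [sat_neg, this]
    | and ψ χ ih1 ih2 =>
      intro hd hat d W W' M s M' s' h h'
      rw [Formula.depth, max_le_iff] at hd
      rw [Formula.atoms, Finset.union_subset_iff] at hat
      rw [sat_and, sat_and, ih1 hd.1 hat.1 d M s M' s' h h',
        ih2 hd.2 hat.2 d M s M' s' h h']
    | or ψ χ ih1 ih2 =>
      intro hd hat d W W' M s M' s' h h'
      rw [Formula.depth, max_le_iff] at hd
      rw [Formula.atoms, Finset.union_subset_iff] at hat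
      rw [sat_or, sat_or, ih1 hd.1 hat.1 d M s M' s' h h',
        ih2 hd.2 hat.2 d M s M' s' h h']
    | D B ψ ih =>
      intro hd _ d W W' M s M' s' _ _
      exact absurd hd (by simp [Formula.depth])
  | succ k ihk =>
    intro φ
    induction φ with
    | top => intro _ _ d W W' M s M' s' _ _; simp [Sat]
    | bot => intro _ _ d W W' M s M' s' _ _; simp [Sat]
    | atom q =>
      intro _ hat d W W' M s M' s' h h'
      have hq : q ∈ P := hat (by simp [Formula.atoms])
      show q ∈ M.V s ↔ q ∈ M'.V s'
      rw [sat_toFormula_atom_iff h q hq, sat_toFormula_atom_iff h' q hq]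
    | neg ψ ih =>
      intro hd hat d W W' M s M' s' h h'
      have := ih hd hat d M s M' s' h h'
      simp only [sat_neg, this]
    | and ψ χ ih1 ih2 =>
      intro hd hat d W W' M s M' s' h h'
      rw [Formula.depth, max_le_iff] at hd
      rw [Formula.atoms, Finset.union_subset_iff] at hat
      rw [sat_and, sat_and, ih1 hd.1 hat.1 d M s M' s' h h',
        ih2 hd.2 hat.2 d M s M' s' h h']
    | or ψ χ ih1 ih2 =>
      intro hd hat d W W' M s M' s' h h'
      rw [Formula.depth, max_le_iff] at hd
      rw [Formula.atoms, Finset.union_subset_iff] at hat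
      rw [sat_or, sat_or, ih1 hd.1 hat.1 d M s M' s' h h',
        ih2 hd.2 hat.2 d M s M' s' h h']
    | D B ψ _ =>
      intro hd hat d W W' M s M' s' h h'
      have hψd : ψ.depth ≤ k := Nat.succ_le_succ_iff.1 hd
      have hψat : ψ.atoms ⊆ P := hat
      have main : ∀ {W₁ W₂ : Type} (M₁ : KModel n W₁) (s₁ : W₁) (M₂ : KModel n W₂) (s₂ : W₂),
          Sat M₁ s₁ (toFormula P (k+1) d) → Sat M₂ s₂ (toFormula P (k+1) d) →
          Sat M₁ s₁ (Formula.D B ψ) → Sat M₂ s₂ (Formula.D B ψ) := by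
        intro W₁ W₂ M₁ s₁ M₂ s₂ h1 h2 hD
        have hn1 := sat_nabla_iff.1 (sat_toFormula_nabla B h1)
        have hn2 := sat_nabla_iff.1 (sat_toFormula_nabla B h2)
        refine sat_D.2 fun t₂ ht₂ => ?_
        obtain ⟨γ, hγ, hsat₂⟩ := hn2.1 t₂ ht₂
        obtain ⟨c, _, rfl⟩ := List.mem_map.1 (mem_normList.1 hγ)
        obtain ⟨t₁, ht₁, hsat₁⟩ := hn1.2 _ hγ
        exact (ihk ψ hψd hψat c M₁ t₁ M₂ t₂ hsat₁ hsat₂).1 (sat_D.1 hD t₁ ht₁)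
      exact ⟨main M s M' s' h h', main M' s' M s h' h⟩

/-! main -/

lemma canonical_entails {L : MSys} {φ : Formula n} {W : Type} {M : KModel n W} {s : W}
    (hsat : Sat M s φ) :
    Entails L (toFormula φ.atoms φ.depth (cdataOf φ.atoms M φ.depth s)) φ := by
  intro W₀ M₀ _ s₀ h₀
  exact (agree φ.atoms φ.depth φ le_rfl (Finset.Subset.refl _) _ M₀ s₀ M s h₀
    (sat_cdataOf _ M _ s)).2 hsat

lemma forget_bigOr (L : MSys) (φ : Formula n) (p : ℕ)
    (Δ : List (Formula n)) (g : Formula n → Formula n)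
    (hΔ : ∀ δ : Formula n, δ ∈ Δ ↔ (δ ∈ DP φ.atoms φ.depth ∧ SatL L δ ∧ Entails L δ φ))
    (hg : ∀ δ ∈ Δ, IsForget L δ p (g δ)) :
    IsForget L φ p (bigOr (Δ.map g)) := by
  refine ⟨?_, ?_, ?_⟩
  · apply atoms_bigOr
    intro ψ hψ
    obtain ⟨δ, hδ, rfl⟩ := List.mem_map.1 hψ
    have h1 := (hg δ hδ).1
    have h2 : δ.atoms ⊆ φ.atoms := by
      obtain ⟨⟨d, rfl⟩, -, -⟩ := (hΔ δ).1 hδ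
      exact atoms_toFormula _ _ _
    exact h1.trans (Finset.erase_subset_erase _ h2)
  · intro W W' M M' s s' hM hM' hsat hbis
    have hsatδ : Sat M s (toFormula φ.atoms φ.depth (cdataOf φ.atoms M φ.depth s)) :=
      sat_cdataOf _ M _ s
    have hδΔ : toFormula φ.atoms φ.depth (cdataOf φ.atoms M φ.depth s) ∈ Δ :=
      (hΔ _).2 ⟨⟨_, rfl⟩, ⟨W, M, s, hM, hsatδ⟩, canonical_entails hsat⟩
    have hsat' := (hg _ hδΔ).2.1 W W' M M' s s' hM hM' hsatδ hbis
    exact sat_bigOr.2 ⟨_, List.mem_map.2 ⟨_, hδΔ, rfl⟩, hsat'⟩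
  · intro W' M' s' hM' hsat'
    obtain ⟨ψ, hψ, hsatψ⟩ := sat_bigOr.1 hsat'
    obtain ⟨δ, hδ, rfl⟩ := List.mem_map.1 hψ
    obtain ⟨W, M, s, hM, hsatδ, hbis⟩ := (hg δ hδ).2.2 W' M' s' hM' hsatψ
    exact ⟨W, M, s, hM, ((hΔ δ).1 hδ).2.2 W M hM s hsatδ, hbis⟩

end Aux

/-- if forgetting results exist for all satisfiable d-canonical formulas,
then `L` is closed under forgetting, and the result of forgetting in `φ` is the
disjunction of the results for the canonical formulas entailing `φ`. -/
theorem closed_under_forgetting_of_canonical {n : ℕ} (L : MSys)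
    (H : ∀ (P : Finset ℕ) (k : ℕ) (δ : Formula n) (p : ℕ),
        δ ∈ DP P k → SatL L δ → ∃ ψ : Formula n, SatL L ψ ∧ IsForget L δ p ψ) :
    ClosedUnderForgetting (n := n) L ∧
    ∀ (φ : Formula n) (p : ℕ), SatL L φ →
      ∀ (Δ : List (Formula n)) (g : Formula n → Formula n),
        (∀ δ : Formula n,
          δ ∈ Δ ↔ (δ ∈ DP φ.atoms φ.depth ∧ SatL L δ ∧ Entails L δ φ)) →
        (∀ δ ∈ Δ, IsForget L δ p (g δ)) →
        IsForget L φ p (bigOr (Δ.map g)) := by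
  classical
  refine ⟨?_, fun φ p _ Δ g hΔ hg => forget_bigOr L φ p Δ g hΔ hg⟩
  intro φ p hφ
  set P := φ.atoms with hP
  set k := φ.depth with hk
  set Δ : List (Formula n) :=
    ((canonF P k).filter fun δ => δ ∈ DP P k ∧ SatL L δ ∧ Entails L δ φ).toList with hΔdef
  have hΔ : ∀ δ : Formula n, δ ∈ Δ ↔ (δ ∈ DP P k ∧ SatL L δ ∧ Entails L δ φ) := by
    intro δ
    rw [hΔdef, Finset.mem_toList, Finset.mem_filter]
    constructor
    · exact And.right
    · intro h
      refine ⟨?_, h⟩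
      obtain ⟨d, rfl⟩ := h.1
      exact toFormula_mem_canonF P k d
  set g : Formula n → Formula n := fun δ =>
    if h : δ ∈ DP P k ∧ SatL L δ then Classical.choose (H P k δ p h.1 h.2) else δ with hgdef
  have hg : ∀ δ ∈ Δ, SatL L (g δ) ∧ IsForget L δ p (g δ) := by
    intro δ hδ
    obtain ⟨h1, h2, -⟩ := (hΔ δ).1 hδ
    rw [hgdef]
    simp only [dif_pos (And.intro h1 h2)]
    exact Classical.choose_spec (H P k δ p h1 h2)
  refine ⟨bigOr (Δ.map g), ?_, forget_bigOr L φ p Δ g hΔ fun δ hδ => (hg δ hδ).2⟩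
  obtain ⟨W, M, s, hM, hsat⟩ := hφ
  have hsatδ : Sat M s (toFormula P k (cdataOf P M k s)) := sat_cdataOf _ M _ s
  have hδΔ : toFormula P k (cdataOf P M k s) ∈ Δ :=
    (hΔ _).2 ⟨⟨_, rfl⟩, ⟨W, M, s, hM, hsatδ⟩, canonical_entails hsat⟩
  obtain ⟨W0, M0, s0, hM0, hs0⟩ := (hg _ hδΔ).1
  exact ⟨W0, M0, s0, hM0, sat_bigOr.2 ⟨_, List.mem_map.2 ⟨_, hδΔ, rfl⟩, hs0⟩⟩

end DKLogic
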